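/- For every positive integer q and all integers m, n₁, n₂, the generalized Kloosterman sum S(m,n₁,n₂;q) is invariant under any permutation of the three arguments m, n₁, n₂; in particular S(m,n₁,n₂;q) = S(n₁,m,n₂;q) and S(m,n₁,n₂;q) = S(m,n₂,n₁;q). -/

import Mathlib

/-- `e(x) = exp(2πix)`. -/
noncomputable def e (x : ℝ) : ℂ := Complex.exp (2 * Real.pi * Complex.I * x)

/-- The generalized Kloosterman sum
`S(m,n₁,n₂;q) = Σ_{a=1}^{q} Σ_{b=1}^{q} δ_q(ab − m) · e((a·n₁ + b·n₂)/q)`. -/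
noncomputable def Kl (m n₁ n₂ : ℤ) (q : ℕ) : ℂ :=
  ∑ a ∈ Finset.Icc 1 q, ∑ b ∈ Finset.Icc 1 q,
    (if (q : ℤ) ∣ ((a : ℤ) * (b : ℤ) - m) then (1 : ℂ) else 0) *
      e (((a : ℝ) * (n₁ : ℝ) + (b : ℝ) * (n₂ : ℝ)) / q)

namespace KloostermanAux

lemma e_add (x y : ℝ) : e (x + y) = e x * e y := by
  simp [e, mul_add, Complex.exp_add]

lemma e_int (n : ℤ) : e (n : ℝ) = 1 := by
  have := Complex.exp_int_mul_two_pi_mul_I n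
  rw [e]
  rw [show ((2 : ℂ) * Real.pi * Complex.I * ((n : ℝ) : ℂ)) = (n : ℂ) * (2 * Real.pi * Complex.I) by
    push_cast; ring]
  exact this

lemma e_eq_one_iff (x : ℝ) : e x = 1 ↔ ∃ n : ℤ, x = n := by
  rw [e, Complex.exp_eq_one_iff]
  constructor
  · rintro ⟨n, hn⟩
    refine ⟨n, ?_⟩
    have h : ((x : ℂ)) * (2 * Real.pi * Complex.I) = (n : ℂ) * (2 * Real.pi * Complex.I) := by
      rw [← hn]; ring
    have h2 : (x : ℂ) = (n : ℂ) := mul_right_cancel₀ Complex.two_pi_I_ne_zero h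
    exact_mod_cast h2
  · rintro ⟨n, rfl⟩
    exact ⟨n, by push_cast; ring⟩

lemma e_nat_mul (x : ℝ) (n : ℕ) : e ((n : ℝ) * x) = (e x) ^ n := by
  rw [e, e, ← Complex.exp_nat_mul]
  congr 1
  push_cast
  ring

/-- Orthogonality of additive characters. -/
lemma orth (q : ℕ) (hq : 0 < q) (k : ℤ) :
    ∑ c ∈ Finset.Icc 1 q, e ((c : ℝ) * (k : ℝ) / q) =
      if (q : ℤ) ∣ k then (q : ℂ) else 0 := by
  have hq0 : (q : ℝ) ≠ 0 := Nat.cast_ne_zero.mpr hq.ne'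
  by_cases hdvd : (q : ℤ) ∣ k
  · rw [if_pos hdvd]
    obtain ⟨t, rfl⟩ := hdvd
    have : ∀ c ∈ Finset.Icc 1 q, e ((c : ℝ) * ((q * t : ℤ) : ℝ) / q) = 1 := by
      intro c _
      rw [show (c : ℝ) * ((q * t : ℤ) : ℝ) / q = (((c : ℤ) * t : ℤ) : ℝ) by
        push_cast; field_simp]
      exact e_int _
    rw [Finset.sum_congr rfl this, Finset.sum_const, Nat.card_Icc]
    simp
  · rw [if_neg hdvd]
    set ζ : ℂ := e ((k : ℝ) / q) with hζ
    have hζ1 : ζ ≠ 1 := by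
      intro h
      obtain ⟨n, hn⟩ := (e_eq_one_iff _).mp h
      apply hdvd
      refine ⟨n, ?_⟩
      have h2 : (k : ℝ) = (q : ℝ) * n := by field_simp at hn; linarith
      exact_mod_cast h2
    have hpow : ∀ c : ℕ, e ((c : ℝ) * (k : ℝ) / q) = ζ ^ c := by
      intro c
      rw [show (c : ℝ) * (k : ℝ) / q = (c : ℝ) * ((k : ℝ) / q) by ring]
      exact e_nat_mul _ _
    have hζq : ζ ^ q = 1 := by
      rw [← e_nat_mul, show (q : ℝ) * ((k : ℝ) / q) = ((k : ℤ) : ℝ) by field_simp]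
      exact e_int _
    calc ∑ c ∈ Finset.Icc 1 q, e ((c : ℝ) * (k : ℝ) / q)
        = ∑ c ∈ Finset.Icc 1 q, ζ ^ c := Finset.sum_congr rfl fun c _ => hpow c
      _ = ∑ i ∈ Finset.range q, ζ ^ (i + 1) := by
          rw [show Finset.Icc 1 q =
              Finset.map ⟨(· + 1), fun a b h => by simpa using h⟩ (Finset.range q) by
            ext x
            simp only [Finset.mem_map, Finset.mem_range, Finset.mem_Icc,
              Function.Embedding.coeFn_mk]
            constructor
            · rintro ⟨h1, h2⟩; exact ⟨x - 1, by omega, by show x - 1 + 1 = x; omega⟩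
            · rintro ⟨y, hy, rfl⟩; show 1 ≤ y + 1 ∧ y + 1 ≤ q; omega]
          rw [Finset.sum_map]; rfl
      _ = ζ * ∑ i ∈ Finset.range q, ζ ^ i := by
          rw [Finset.mul_sum]; exact Finset.sum_congr rfl fun i _ => by ring
      _ = 0 := by rw [geom_sum_eq hζ1, hζq]; simp

/-- The symmetrized triple sum. -/
noncomputable def T (q : ℕ) (x y z : ℤ) : ℂ :=
  ∑ a ∈ Finset.Icc 1 q, ∑ b ∈ Finset.Icc 1 q, ∑ c ∈ Finset.Icc 1 q,
    e (((a : ℝ) * (x : ℝ) + (b : ℝ) * (y : ℝ) + (c : ℝ) * (z : ℝ)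
        - (a : ℝ) * (b : ℝ) * (c : ℝ)) / q)

lemma T_swap12 (q : ℕ) (x y z : ℤ) : T q x y z = T q y x z := by
  rw [T, T, Finset.sum_comm]
  refine Finset.sum_congr rfl fun a _ => Finset.sum_congr rfl fun b _ =>
    Finset.sum_congr rfl fun c _ => ?_
  congr 1; ring

lemma T_swap23 (q : ℕ) (x y z : ℤ) : T q x y z = T q x z y := by
  rw [T, T]
  refine Finset.sum_congr rfl fun a _ => ?_
  rw [Finset.sum_comm]
  refine Finset.sum_congr rfl fun b _ => Finset.sum_congr rfl fun c _ => ?_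
  congr 1; ring

lemma Kl_eq_T (q : ℕ) (hq : 0 < q) (m n₁ n₂ : ℤ) :
    Kl m n₁ n₂ q = (q : ℂ)⁻¹ * T q n₁ n₂ m := by
  have hq0 : (q : ℝ) ≠ 0 := Nat.cast_ne_zero.mpr hq.ne'
  have hqC : (q : ℂ) ≠ 0 := Nat.cast_ne_zero.mpr hq.ne'
  rw [Kl, T, Finset.mul_sum]
  refine Finset.sum_congr rfl fun a _ => ?_
  rw [Finset.mul_sum]
  refine Finset.sum_congr rfl fun b _ => ?_
  have key : ∑ c ∈ Finset.Icc 1 q,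
      e (((a : ℝ) * (n₁ : ℝ) + (b : ℝ) * (n₂ : ℝ) + (c : ℝ) * (m : ℝ)
          - (a : ℝ) * (b : ℝ) * (c : ℝ)) / q)
      = (if (q : ℤ) ∣ (m - (a : ℤ) * b) then (q : ℂ) else 0) *
          e (((a : ℝ) * (n₁ : ℝ) + (b : ℝ) * (n₂ : ℝ)) / q) := by
    rw [← orth q hq (m - (a : ℤ) * b), Finset.sum_mul]
    refine Finset.sum_congr rfl fun c _ => ?_
    rw [← e_add]
    congr 1
    push_cast
    field_simp
    ring
  rw [key]
  by_cases h : (q : ℤ) ∣ ((a : ℤ) * b - m)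
  · rw [if_pos h, if_pos (dvd_sub_comm.mpr h), one_mul]
    field_simp
  · rw [if_neg h, if_neg (fun h' => h (dvd_sub_comm.mpr h'))]
    simp

end KloostermanAux

set_option maxHeartbeats 2000000 in
theorem kloosterman_perm_invariant (q : ℕ) (hq : 0 < q) (m n₁ n₂ : ℤ) :
    (∀ σ : Equiv.Perm (Fin 3),
      Kl (![m, n₁, n₂] (σ 0)) (![m, n₁, n₂] (σ 1)) (![m, n₁, n₂] (σ 2)) q
        = Kl m n₁ n₂ q) ∧
    Kl m n₁ n₂ q = Kl n₁ m n₂ q ∧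
    Kl m n₁ n₂ q = Kl m n₂ n₁ q := by
  open KloostermanAux in
  have key : ∀ x y z : ℤ, Kl x y z q = Kl y x z q := by
    intro x y z
    rw [Kl_eq_T q hq, Kl_eq_T q hq]
    -- Kl x y z = q⁻¹ T y z x ; Kl y x z = q⁻¹ T x z y
    rw [show KloostermanAux.T q y z x = KloostermanAux.T q x z y by
      rw [T_swap12, T_swap23, T_swap12]]
  have key2 : ∀ x y z : ℤ, Kl x y z q = Kl x z y q := by
    intro x y z
    rw [Kl_eq_T q hq, Kl_eq_T q hq]
    rw [show KloostermanAux.T q y z x = KloostermanAux.T q z y x by rw [T_swap12]]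
  refine ⟨?_, key m n₁ n₂, key2 m n₁ n₂⟩
  intro σ
  have h01 : σ 0 ≠ σ 1 := fun h => absurd (σ.injective h) (by decide)
  have h02 : σ 0 ≠ σ 2 := fun h => absurd (σ.injective h) (by decide)
  have h12 : σ 1 ≠ σ 2 := fun h => absurd (σ.injective h) (by decide)
  obtain ⟨i, hi⟩ : ∃ i, σ 0 = i := ⟨_, rfl⟩
  obtain ⟨j, hj⟩ : ∃ j, σ 1 = j := ⟨_, rfl⟩
  obtain ⟨k, hk⟩ : ∃ k, σ 2 = k := ⟨_, rfl⟩
  rw [hi, hj, hk]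
  rw [hi, hj] at h01
  rw [hi, hk] at h02
  rw [hj, hk] at h12
  clear hi hj hk
  fin_cases i <;> fin_cases j <;> fin_cases k <;>
    simp only [ne_eq, not_true_eq_false, Fin.mk_one, Fin.isValue,
      Matrix.cons_val_zero, Matrix.cons_val_one, Matrix.head_cons,
      Matrix.cons_val_two, Matrix.tail_cons] at h01 h02 h12 ⊢ <;>
    first
      | exact absurd rfl h01
      | exact absurd rfl h02
      | exact absurd rfl h12
      | rfl
      | (exact (key _ _ _).symm)
      | (exact (key2 _ _ _).symm)
      | (exact ((key _ _ _).trans (key2 _ _ _)).symm)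
      | (exact ((key2 _ _ _).trans (key _ _ _)).symm)
      | (exact ((key _ _ _).trans ((key2 _ _ _).trans (key _ _ _))).symm)
      | (exact ((key2 _ _ _).trans ((key _ _ _).trans (key2 _ _ _))).symm)
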